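/- Let G be a finitely generated group whose word problem WP(G) is recursively enumerable, let X ⊆ A_X^G be an effectively closed subshift, and let φ : X → Y be a factor code onto a subshift Y ⊆ A_Y^G. Then Y is effectively closed. Consequently, for recursively presented groups the class of effectively closed subshifts is closed under factors. -/

import Mathlib

open scoped Classical
set_option linter.unusedSectionVars false
set_option maxHeartbeats 1000000

noncomputable section

namespace SDG

/-! ### Relativized computability -/

/-- Partial recursive functions `ℕ →. ℕ` relative to an oracle `O`. -/
inductive NatPartrecIn (O : ℕ →. ℕ) : (ℕ →. ℕ) → Prop
  | oracle : NatPartrecIn O O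
  | zero : NatPartrecIn O (pure 0)
  | succ : NatPartrecIn O Nat.succ
  | left : NatPartrecIn O ↑fun n : ℕ => n.unpair.1
  | right : NatPartrecIn O ↑fun n : ℕ => n.unpair.2
  | pair {f g} : NatPartrecIn O f → NatPartrecIn O g →
      NatPartrecIn O fun n => Nat.pair <$> f n <*> g n
  | comp {f g} : NatPartrecIn O f → NatPartrecIn O g →
      NatPartrecIn O fun n => g n >>= f
  | prec {f g} : NatPartrecIn O f → NatPartrecIn O g →
      NatPartrecIn O (Nat.unpaired fun a n =>
        n.rec (f a) fun y IH => do let i ← IH; g (Nat.pair a (Nat.pair y i)))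
  | rfind {f} : NatPartrecIn O f →
      NatPartrecIn O fun a => Nat.rfind fun n => (fun m => m = 0) <$> f (Nat.pair a n)

/-- A partial function between `Primcodable` types is partial recursive in the oracle `O`. -/
def PartrecIn (O : ℕ →. ℕ) {α σ : Type} [Primcodable α] [Primcodable σ] (f : α →. σ) : Prop :=
  NatPartrecIn O fun n =>
    Part.bind (Part.ofOption (Encodable.decode (α := α) n)) fun a => (f a).map Encodable.encode

/-- A predicate is recursively enumerable in the oracle `O` if it is the domain of a partial
function recursive in `O`. -/
def RePredIn (O : ℕ →. ℕ) {α : Type} [Primcodable α] (p : α → Prop) : Prop :=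
  PartrecIn O fun a => Part.assert (p a) fun _ => Part.some ()

/-- The characteristic function (as an oracle `ℕ →. ℕ`) of a set `L` of elements of a
`Primcodable` type: on the code of an element of `L` it answers `1`, elsewhere `0`. -/
def charFun {α : Type} [Primcodable α] (L : Set α) : ℕ →. ℕ :=
  fun n => Part.some (if ∃ a ∈ L, Encodable.encode a = n then 1 else 0)

/-! ### Finitely generated groups, words and pattern codings -/

variable {G : Type} [Group G]

/-- The group element represented by a word over the generators `S`. -/
def wordEval {k : ℕ} (S : Fin k → G) (w : List (Fin k)) : G :=
  (w.map S).prod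

/-- `S : Fin k → G` is a finite symmetric generating family containing the identity. -/
def IsGenData {k : ℕ} (S : Fin k → G) : Prop :=
  (∃ i, S i = 1) ∧ (∀ i, ∃ j, S j = (S i)⁻¹) ∧ Subgroup.closure (Set.range S) = ⊤

/-- The word problem of `G` with respect to the generating family `S`. -/
def WP {k : ℕ} (S : Fin k → G) : Set (List (Fin k)) :=
  {w | wordEval S w = 1}

/-- A pattern coding over the alphabet `A`: a finite list of pairs (word, symbol). -/
abbrev PatternCoding (k : ℕ) (A : Type) : Type :=
  List (List (Fin k) × A)

/-- The subshift defined by a set `C` of pattern codings: configurations in which no translate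
of a coded pattern occurs. -/
def XC {k : ℕ} (S : Fin k → G) {A : Type} (C : Set (PatternCoding k A)) : Set (G → A) :=
  {x | ¬ ∃ (g : G) (c : PatternCoding k A), c ∈ C ∧ ∀ p ∈ c, x (g * wordEval S p.1) = p.2}

/-- A set is effectively closed if it is defined by a recursively enumerable set of
pattern codings. -/
def EffectivelyClosed {k : ℕ} (S : Fin k → G) {A : Type} [Primcodable A]
    (X : Set (G → A)) : Prop :=
  ∃ C : Set (PatternCoding k A), REPred (· ∈ C) ∧ X = XC S C

/-- A set is `G`-effectively closed if it is defined by a set of pattern codings which is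
recursively enumerable with oracle the word problem of `G`. -/
def GEffectivelyClosed {k : ℕ} (S : Fin k → G) {A : Type} [Primcodable A]
    (X : Set (G → A)) : Prop :=
  ∃ C : Set (PatternCoding k A), RePredIn (charFun (WP S)) (· ∈ C) ∧ X = XC S C

/-- A pattern coding is consistent if words representing the same group element receive the
same symbol. -/
def Consistent {k : ℕ} (S : Fin k → G) {A : Type} (c : PatternCoding k A) : Prop :=
  ∀ p ∈ c, ∀ q ∈ c, wordEval S p.1 = wordEval S q.1 → p.2 = q.2

/-! ### Subshifts, SFTs, sofic subshifts -/

/-- `X ⊆ A^G` is a subshift: closed (for the product of the discrete topology) and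
shift-invariant. -/
def IsSubshift {A : Type} (X : Set (G → A)) : Prop :=
  (letI : TopologicalSpace A := ⊥; IsClosed X) ∧
    ∀ x ∈ X, ∀ g : G, (fun h => x (g⁻¹ * h)) ∈ X

/-- A pattern with finite support over the alphabet `A`. -/
structure Pattern (G : Type) (A : Type) where
  supp : Finset G
  val : (g : G) → g ∈ supp → A

/-- The pattern `p` occurs in the configuration `x` at position `g`. -/
def PatternOccurs {A : Type} (p : Pattern G A) (x : G → A) (g : G) : Prop :=
  ∀ (h : G) (hh : h ∈ p.supp), x (g * h) = p.val h hh

/-- The subshift defined by a set of forbidden patterns. -/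
def XPat {A : Type} (Fs : Set (Pattern G A)) : Set (G → A) :=
  {x | ¬ ∃ (g : G) (p : Pattern G A), p ∈ Fs ∧ PatternOccurs p x g}

/-- A subshift of finite type: defined by a finite set of forbidden patterns. -/
def IsSFT {A : Type} (X : Set (G → A)) : Prop :=
  ∃ Fs : Set (Pattern G A), Fs.Finite ∧ X = XPat Fs

/-- A witness that `X` is sofic: an SFT `Y` over a finite alphabet `B` together with a factor
code (continuous shift-equivariant surjection) from `Y` onto `X`. -/
structure SoficVia (G : Type) [Group G] {A : Type} (X : Set (G → A)) : Type 1 where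
  B : Type
  finB : Fintype B
  Y : Set (G → B)
  sft : IsSFT Y
  subY : IsSubshift Y
  phi : (G → B) → (G → A)
  cont : letI : TopologicalSpace B := ⊥
         letI : TopologicalSpace A := ⊥
         ContinuousOn phi Y
  equiv : ∀ y ∈ Y, ∀ g : G, phi (fun h => y (g⁻¹ * h)) = fun h => phi y (g⁻¹ * h)
  image : phi '' Y = X

/-- A subshift is sofic if it is the image of an SFT under a factor code. -/
def IsSofic {A : Type} (X : Set (G → A)) : Prop :=
  Nonempty (SoficVia G X)

/-- A factor code from `X` onto `Y`: continuous (discrete product topologies),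
shift-equivariant and surjective. -/
def FactorCode {A B : Type} (X : Set (G → A)) (Y : Set (G → B))
    (φ : (G → A) → (G → B)) : Prop :=
  (letI : TopologicalSpace A := ⊥
   letI : TopologicalSpace B := ⊥
   ContinuousOn φ X) ∧
  (∀ x ∈ X, ∀ g : G, φ (fun h => x (g⁻¹ * h)) = fun h => φ x (g⁻¹ * h)) ∧
  φ '' X = Y

/-- Two subshifts are conjugate if there is a shift-equivariant homeomorphism between them. -/
def Conjugate {A B : Type} (X : Set (G → A)) (Y : Set (G → B)) : Prop :=
  ∃ (φ : (G → A) → (G → B)) (ψ : (G → B) → (G → A)),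
    FactorCode X Y φ ∧ FactorCode Y X ψ ∧
    (∀ x ∈ X, ψ (φ x) = x) ∧ (∀ y ∈ Y, φ (ψ y) = y)

/-- The one-or-less subshift: configurations with at most one occurrence of the symbol `1`
(represented by `true`). -/
def Xle1 (G : Type) : Set (G → Bool) :=
  {x | ∀ g h : G, x g = true → x h = true → g = h}

/-! ### `G`-machines -/

/-- A `G`-machine: finite set of states, finite tape alphabet `A` with a blank symbol, initial
state, accepting states, and a transition function moving with the generators `Fin k`. -/
structure GMachine (k : ℕ) (A : Type) : Type 1 where
  Q : Type
  finQ : Fintype Q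
  blank : A
  q0 : Q
  QF : Set Q
  delta : A × Q → A × Q × Fin k

/-- One step of a `G`-machine in the fixed head model: if `δ(x(1),q) = (a,q',s)` then the new
configuration is `σ_{s⁻¹} x̃` where `x̃` is `x` with the value at `1` replaced by `a`. -/
def GMachine.step {k : ℕ} {A : Type} (M : GMachine k A) (S : Fin k → G) :
    (G → A) × M.Q → (G → A) × M.Q :=
  fun xq =>
    let t := M.delta (xq.1 1, xq.2)
    let xt : G → A := Function.update xq.1 1 t.1
    (fun h => xt (S t.2.2 * h), t.2.1)

/-- The configuration which equals the pattern `p` on its support and `blank` elsewhere. -/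
def Pattern.config {A : Type} (p : Pattern G A) (blank : A) : G → A :=
  fun g => if h : g ∈ p.supp then p.val g h else blank

/-- The `G`-machine `M` accepts the pattern `p` if starting from the configuration `x^p` in the
initial state it eventually reaches an accepting state. -/
def GMachine.Accepts {k : ℕ} {A : Type} (M : GMachine k A) (S : Fin k → G)
    (p : Pattern G A) : Prop :=
  ∃ n : ℕ, ((M.step S)^[n] (p.config M.blank, M.q0)).2 ∈ M.QF

/-- A set of patterns is `G`-recursively enumerable if some `G`-machine accepts exactly its
elements. -/
def GRecEnum {k : ℕ} (S : Fin k → G) {A : Type} (L : Set (Pattern G A)) : Prop :=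
  ∃ M : GMachine k A, ∀ p : Pattern G A, M.Accepts S p ↔ p ∈ L

/-- The consistent pattern coding `c` defines the pattern `p`. -/
def Defines {k : ℕ} (S : Fin k → G) {A : Type} (c : PatternCoding k A)
    (p : Pattern G A) : Prop :=
  (∀ g : G, g ∈ p.supp ↔ ∃ q ∈ c, wordEval S q.1 = g) ∧
  ∀ q ∈ c, ∀ hg : wordEval S q.1 ∈ p.supp, p.val (wordEval S q.1) hg = q.2

/-- `p(C)`: the set of patterns defined by the consistent pattern codings of `C`. -/
def patternsOf {k : ℕ} (S : Fin k → G) {A : Type} (C : Set (PatternCoding k A)) :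
    Set (Pattern G A) :=
  {p | ∃ c ∈ C, Consistent S c ∧ Defines S c p}

/-- A set of patterns is closed by extensions if any pattern extending a pattern of the set
also belongs to the set. -/
def ClosedByExtensions {A : Type} (L : Set (Pattern G A)) : Prop :=
  ∀ (p₁ p₂ : Pattern G A) (hsub : p₁.supp ⊆ p₂.supp),
    (∀ (g : G) (hg : g ∈ p₁.supp), p₂.val g (hsub hg) = p₁.val g hg) →
    p₁ ∈ L → p₂ ∈ L

/-! ### Balls, ends, amenability -/

/-- The ball of radius `n` in the word metric given by `S`. -/
def ballS {k : ℕ} (S : Fin k → G) (n : ℕ) : Set G :=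
  {x | ∃ w : List (Fin k), w.length ≤ n ∧ wordEval S w = x}

/-- Adjacency in the Cayley graph restricted to the set `V`. -/
def Adj {k : ℕ} (S : Fin k → G) (V : Set G) (a b : G) : Prop :=
  a ∈ V ∧ b ∈ V ∧ ∃ i, a * S i = b

/-- Reachability inside `V` in the Cayley graph of `(G,S)`. -/
def Reach {k : ℕ} (S : Fin k → G) (V : Set G) (a b : G) : Prop :=
  Relation.ReflTransGen (Adj S V) a b

/-- `G` has at least two ends: for some `n`, the complement of the ball of radius `n` in the
Cayley graph has at least two infinite connected components. -/
def HasTwoOrMoreEnds {k : ℕ} (S : Fin k → G) : Prop :=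
  ∃ (n : ℕ) (x y : G), x ∉ ballS S n ∧ y ∉ ballS S n ∧
    {z | Reach S (ballS S n)ᶜ x z}.Infinite ∧
    {z | Reach S (ballS S n)ᶜ y z}.Infinite ∧
    ¬ Reach S (ballS S n)ᶜ x y

/-- The Følner condition: `G` is amenable. -/
def FolnerAmenable (G : Type) [Group G] : Prop :=
  ∀ (K : Finset G) (ε : ℝ), 0 < ε →
    ∃ F : Finset G, F.Nonempty ∧ ∀ k ∈ K,
      ((F \ F.image (fun x => x * k)).card : ℝ) < ε * F.card

/-! ### `G × ℤ`, presentations, hardness and the domino problems -/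

/-- Generators of `G × ℤ`: the generators of `G` paired with `0`, together with `(1,±1)`. -/
def prodGens {k : ℕ} (S : Fin k → G) : Fin (k + 2) → G × Multiplicative ℤ :=
  fun i =>
    if h : (i : ℕ) < k then (S ⟨i, h⟩, 1)
    else if (i : ℕ) = k then (1, Multiplicative.ofAdd 1)
    else (1, Multiplicative.ofAdd (-1))

/-- The element of the free group over the generator indices represented by a word. -/
def freeWord {k : ℕ} (w : List (Fin k)) : FreeGroup (Fin k) :=
  (w.map FreeGroup.of).prod

/-- `G` is recursively presented with respect to `S`: there is a recursively enumerable set of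
relators (words over the generators) whose normal closure in the free group over the
generator indices is the kernel of the evaluation map. -/
def RecursivelyPresented {k : ℕ} (S : Fin k → G) : Prop :=
  ∃ R : Set (List (Fin k)), REPred (· ∈ R) ∧
    MonoidHom.ker (FreeGroup.lift S) = Subgroup.normalClosure (freeWord '' R)

/-- `L` is hard for the class of predicates recursively enumerable in the oracle `O`
(equivalently, hard for the halting problem of machines with oracle `O`): every
such predicate many-one reduces to `L` via a computable function. -/
def OracleREHard {α : Type} [Primcodable α] (O : ℕ →. ℕ) (L : Set α) : Prop :=
  ∀ p : ℕ → Prop, RePredIn O p → ∃ f : ℕ → α, Computable f ∧ ∀ n, p n ↔ f n ∈ L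

/-- The domino problem of `(K,T)`: pairs `(N, F)` of an alphabet size and a finite list of
pattern codings over `ℕ` such that no configuration with symbols `< N` avoids `F`. -/
def DP {K : Type} [Group K] {m : ℕ} (T : Fin m → K) : Set (ℕ × List (PatternCoding m ℕ)) :=
  {q | ¬ ∃ x : K → ℕ, (∀ g, x g < q.1) ∧ x ∈ XC T {c | c ∈ q.2}}

/-- The origin constrained domino problem of `(K,T)`: triples `((N,a),F)` such that no
configuration with symbols `< N` and the symbol `a` at the origin avoids `F`. -/
def OCDP {K : Type} [Group K] {m : ℕ} (T : Fin m → K) :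
    Set ((ℕ × ℕ) × List (PatternCoding m ℕ)) :=
  {q | ¬ ∃ x : K → ℕ, (∀ g, x g < q.1.1) ∧ x 1 = q.1.2 ∧ x ∈ XC T {c | c ∈ q.2}}

section Lists
variable {α β : Type} [Primcodable α] [Primcodable β]

/-- All lists with entries in `l` of length exactly `m`. -/
def listsOf (l : List α) : ℕ → List (List α)
  | 0 => [[]]
  | m + 1 => l.flatMap fun a => (listsOf l m).map (a :: ·)

theorem mem_listsOf {l : List α} : ∀ {m : ℕ} {t : List α},
    t ∈ listsOf l m ↔ t.length = m ∧ ∀ x ∈ t, x ∈ l := by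
  intro m
  induction m with
  | zero =>
    intro t
    simp only [listsOf, List.mem_singleton, List.length_eq_zero_iff]
    constructor
    · rintro rfl; simp
    · rintro ⟨rfl, -⟩; rfl
  | succ m ih =>
    intro t
    simp only [listsOf, List.mem_flatMap, List.mem_map]
    constructor
    · rintro ⟨a, ha, t', ht', rfl⟩
      rcases ih.1 ht' with ⟨hlen, hmem⟩
      refine ⟨by simp [hlen], ?_⟩
      intro x hx
      rcases List.mem_cons.1 hx with rfl | hx
      · exact ha
      · exact hmem x hx
    · rintro ⟨hlen, hmem⟩
      cases t with
      | nil => simp at hlen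
      | cons a t' =>
        refine ⟨a, hmem a (by simp), t', ih.2 ⟨by simpa using hlen, fun x hx => hmem x (by simp [hx])⟩, rfl⟩

/-- All lists with entries in `l` of length at most `n`. -/
def listsLe (l : List α) (n : ℕ) : List (List α) :=
  (List.range (n + 1)).flatMap (listsOf l)

theorem mem_listsLe {l : List α} {n : ℕ} {t : List α} :
    t ∈ listsLe l n ↔ t.length ≤ n ∧ ∀ x ∈ t, x ∈ l := by
  simp only [listsLe, List.mem_flatMap, List.mem_range, mem_listsOf]
  constructor
  · rintro ⟨m, hm, rfl, hmem⟩
    exact ⟨Nat.lt_succ_iff.1 hm, hmem⟩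
  · rintro ⟨hlen, hmem⟩
    exact ⟨t.length, Nat.lt_succ_iff.2 hlen, rfl, hmem⟩

theorem primrec_listsOf (l : List α) : Primrec (listsOf l) := by
  have h1 : Primrec fun T : List (List α) => l.flatMap fun a => T.map (a :: ·) :=
    Primrec.list_flatMap (Primrec.const l)
      (Primrec.list_map Primrec.fst
        (Primrec.list_cons.comp (Primrec.snd.comp Primrec.fst) Primrec.snd).to₂).to₂
  have h2 : Primrec fun m : ℕ =>
      (Nat.rec [[]] (fun _ T => l.flatMap fun a => T.map (a :: ·)) m : List (List α)) :=
    Primrec.nat_rec₁ _ (h1.comp Primrec.snd).to₂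
  refine h2.of_eq fun m => ?_
  induction m with
  | zero => rfl
  | succ m ih => simp [listsOf, ← ih]

theorem primrec_listsLe (l : List α) : Primrec (listsLe l) :=
  Primrec.list_flatMap (Primrec.list_range.comp Primrec.succ)
    ((primrec_listsOf l).comp Primrec.snd).to₂

theorem list_all_eq_foldr (p : α → Bool) (l : List α) :
    l.all p = l.foldr (fun b r => p b && r) true := by
  induction l with
  | nil => rfl
  | cons a l ih => simp [List.all_cons, ih]

theorem primrec_list_all {f : α → List β} {p : α → β → Bool}
    (hf : Primrec f) (hp : Primrec₂ p) : Primrec fun a => (f a).all (p a) := by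
  have := Primrec.list_foldr (h := fun a (bs : β × Bool) => p a bs.1 && bs.2) hf
    (Primrec.const true)
    (Primrec.and.comp (hp.comp Primrec.fst (Primrec.fst.comp Primrec.snd))
      (Primrec.snd.comp Primrec.snd)).to₂
  exact this.of_eq fun a => (list_all_eq_foldr _ _).symm

theorem list_any_eq_foldr (p : α → Bool) (l : List α) :
    l.any p = l.foldr (fun b r => p b || r) false := by
  induction l with
  | nil => rfl
  | cons a l ih => simp [List.any_cons, ih]

theorem primrec_list_any {f : α → List β} {p : α → β → Bool}
    (hf : Primrec f) (hp : Primrec₂ p) : Primrec fun a => (f a).any (p a) := by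
  have := Primrec.list_foldr (h := fun a (bs : β × Bool) => p a bs.1 || bs.2) hf
    (Primrec.const false)
    (Primrec.or.comp (hp.comp Primrec.fst (Primrec.fst.comp Primrec.snd))
      (Primrec.snd.comp Primrec.snd)).to₂
  exact this.of_eq fun a => (list_any_eq_foldr _ _).symm

end Lists

section Words
variable {k : ℕ}

theorem wordEval_nil (S : Fin k → G) : wordEval S [] = 1 := rfl

theorem wordEval_cons (S : Fin k → G) (i : Fin k) (w : List (Fin k)) :
    wordEval S (i :: w) = S i * wordEval S w := by simp [wordEval]

theorem wordEval_append (S : Fin k → G) (v w : List (Fin k)) :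
    wordEval S (v ++ w) = wordEval S v * wordEval S w := by simp [wordEval]

theorem wordEval_wordInv (S : Fin k → G) (invg : Fin k → Fin k)
    (h : ∀ i, S (invg i) = (S i)⁻¹) (w : List (Fin k)) :
    wordEval S (w.reverse.map invg) = (wordEval S w)⁻¹ := by
  induction w with
  | nil => simp [wordEval]
  | cons i w ih =>
    simp only [List.reverse_cons, List.map_append, List.map_cons, List.map_nil]
    rw [wordEval_append, wordEval_cons, ih, wordEval_cons, wordEval_nil, h, mul_one,
      mul_inv_rev]

theorem exists_word (S : Fin k → G) (hS : IsGenData S) (g : G) :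
    ∃ w : List (Fin k), wordEval S w = g := by
  obtain ⟨-, hsym, hcl⟩ := hS
  choose invg hinvg using hsym
  have hg : g ∈ Subgroup.closure (Set.range S) := by rw [hcl]; trivial
  induction hg using Subgroup.closure_induction with
  | mem x hx =>
    obtain ⟨i, rfl⟩ := hx
    exact ⟨[i], by simp [wordEval]⟩
  | one => exact ⟨[], rfl⟩
  | mul x y _ _ hx hy =>
    obtain ⟨v, rfl⟩ := hx
    obtain ⟨w, rfl⟩ := hy
    exact ⟨v ++ w, wordEval_append S v w⟩
  | inv x _ hx =>
    obtain ⟨w, rfl⟩ := hx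
    exact ⟨w.reverse.map invg, wordEval_wordInv S invg hinvg w⟩

end Words

section Codes
open Nat.Partrec (Code)
open Nat.Partrec.Code

theorem rePred_code {α : Type} [Primcodable α] {p : α → Prop} (h : REPred p) :
    ∃ c : Nat.Partrec.Code, ∀ m : ℕ,
      (∃ s, ((evaln s c m).isSome : Prop)) ↔ ∃ a, Encodable.decode m = some a ∧ p a := by
  obtain ⟨c, hc⟩ := Nat.Partrec.Code.exists_code.1 h
  refine ⟨c, fun m => ?_⟩
  have hdom : (eval c m).Dom ↔ ∃ a, Encodable.decode m = some a ∧ p a := by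
    rw [hc]
    cases hdec : (Encodable.decode m : Option α) with
    | none => simp [hdec]
    | some a => simp [hdec, Part.assert]
  rw [← hdom, Part.dom_iff_mem]
  constructor
  · rintro ⟨s, hs⟩
    obtain ⟨x, hx⟩ := Option.isSome_iff_exists.1 hs
    exact ⟨x, evaln_sound hx⟩
  · rintro ⟨x, hx⟩
    obtain ⟨s, hs⟩ := evaln_complete.1 hx
    exact ⟨s, Option.isSome_iff_exists.2 ⟨x, hs⟩⟩

theorem rePred_code_encode {α : Type} [Primcodable α] {p : α → Prop} {c : Nat.Partrec.Code}
    (hc : ∀ m : ℕ, (∃ s, ((evaln s c m).isSome : Prop)) ↔ ∃ a, Encodable.decode m = some a ∧ p a)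
    (a : α) : p a ↔ ∃ s, ((evaln s c (Encodable.encode a)).isSome : Prop) := by
  rw [hc]
  simp [Encodable.encodek]

end Codes

section Ultra

theorem ultra_exists_const {A : Type} [Finite A] [Nonempty A] (U : Ultrafilter ℕ) (v : ℕ → A) :
    ∃ a, {n | v n = a} ∈ U := by
  by_contra h
  push_neg at h
  have h' : ∀ a : A, {n | v n = a}ᶜ ∈ U := fun a => Ultrafilter.compl_mem_iff_notMem.2 (h a)
  have hI : (⋂ a : A, {n | v n = a}ᶜ) ∈ U := Filter.iInter_mem.2 h'
  obtain ⟨n, hn⟩ := Ultrafilter.nonempty_of_mem hI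
  exact (Set.mem_iInter.1 hn (v n)) rfl

end Ultra


theorem window_exists {G A B : Type} [Finite A] {X : Set (G → A)} {φ : (G → A) → (G → B)}
    (e : G)
    (hX : letI : TopologicalSpace A := ⊥; IsClosed X)
    (hcont : letI : TopologicalSpace A := ⊥; letI : TopologicalSpace B := ⊥;
      ContinuousOn φ X) :
    ∃ E : Finset G, ∀ x ∈ X, ∀ x' ∈ X, (∀ g ∈ E, x g = x' g) → φ x e = φ x' e := by
  letI tA : TopologicalSpace A := ⊥
  letI tB : TopologicalSpace B := ⊥
  haveI : DiscreteTopology A := ⟨rfl⟩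
  haveI : DiscreteTopology B := ⟨rfl⟩
  have hXc : IsCompact X := hX.isCompact
  set Ψ : (G → A) → B := fun x => φ x e with hΨdef
  have hΨ : ContinuousOn Ψ X := (continuous_apply e).comp_continuousOn hcont
  -- local windows
  have key : ∀ x ∈ X, ∃ F : Finset G, ∀ x' ∈ X, (∀ g ∈ F, x' g = x g) → Ψ x' = Ψ x := by
    intro x hx
    have h1 : Ψ ⁻¹' {Ψ x} ∈ nhdsWithin x X := by
      have := hΨ x hx
      exact this (by rw [nhds_discrete]; exact rfl)
    rw [mem_nhdsWithin] at h1
    obtain ⟨U, hUo, hxU, hUsub⟩ := h1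
    have hU : U ∈ nhds x := hUo.mem_nhds hxU
    rw [nhds_pi, Filter.mem_pi] at hU
    obtain ⟨I, hIfin, t, ht, hsub⟩ := hU
    refine ⟨hIfin.toFinset, fun x' hx' hagree => ?_⟩
    have hx'U : x' ∈ U := by
      apply hsub
      intro g hg
      have : x' g = x g := hagree g (hIfin.mem_toFinset.2 hg)
      rw [this]
      have := ht g
      rw [nhds_discrete] at this
      exact this
    exact hUsub ⟨hx'U, hx'⟩
  -- choose windows
  choose! F hF using key
  have hUopen : ∀ x : G → A, IsOpen {x' : G → A | ∀ g ∈ F x, x' g = x g} := by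
    intro x
    have : {x' : G → A | ∀ g ∈ F x, x' g = x g} = ⋂ g ∈ F x, (fun x' : G → A => x' g) ⁻¹' {x g} := by
      ext x'; simp
    rw [this]
    exact isOpen_biInter_finset fun g _ => (continuous_apply g).isOpen_preimage _ (isOpen_discrete _)
  obtain ⟨T, hTsub⟩ := hXc.elim_nhds_subcover' (fun x _ => {x' : G → A | ∀ g ∈ F x, x' g = x g})
    (fun x hx => (hUopen x).mem_nhds (fun g _ => rfl))
  refine ⟨T.biUnion fun xh => F xh.1, fun x hx x' hx' hagree => ?_⟩
  obtain ⟨x₀, hx₀T, hxU⟩ := Set.mem_iUnion₂.1 (hTsub hx)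
  have hFsub : F x₀.1 ⊆ T.biUnion fun xh => F xh.1 := Finset.subset_biUnion_of_mem (fun xh => F xh.1) hx₀T
  have h1 : Ψ x = Ψ x₀.1 := hF x₀.1 x₀.2 x hx hxU
  have h2 : Ψ x' = Ψ x₀.1 := by
    refine hF x₀.1 x₀.2 x' hx' fun g hg => ?_
    rw [← hagree g (hFsub hg)]
    exact hxU g hg
  show Ψ x = Ψ x'
  rw [h1, h2]


theorem rePred_exists {α : Type} [Primcodable α] {f : α × ℕ → Bool} (hf : Primrec f) :
    REPred fun a => ∃ n, f (a, n) = true := by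
  have hg : Primrec fun x : α × ℕ => if f x = true then some () else (none : Option Unit) :=
    Primrec.ite (Primrec.eq.comp hf (Primrec.const true))
      (Primrec.const (some ())) (Primrec.const none)
  have hg2 : Computable₂ fun (a : α) (n : ℕ) =>
      if f (a, n) = true then some () else (none : Option Unit) := hg.to_comp.to₂
  have hpr : Partrec fun a : α => Nat.rfindOpt fun n =>
      if f (a, n) = true then some () else (none : Option Unit) := Partrec.rfindOpt hg2
  refine hpr.of_eq fun a => ?_
  apply Part.ext'
  · rw [Nat.rfindOpt_dom]
    constructor
    · rintro ⟨n, u, hu⟩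
      refine ⟨⟨n, ?_⟩, trivial⟩
      by_contra hfan
      rw [if_neg hfan] at hu
      exact Option.not_mem_none u hu
    · rintro ⟨⟨n, hn⟩, -⟩
      exact ⟨n, (), by rw [if_pos hn]; rfl⟩
  · intro h₁ h₂
    exact Subsingleton.elim _ _

theorem closed_sep {G B : Type} {Y : Set (G → B)}
    (hY : letI : TopologicalSpace B := ⊥; IsClosed Y) {z : G → B} (hz : z ∉ Y) :
    ∃ F : Finset G, ∀ y ∈ Y, ∃ g ∈ F, y g ≠ z g := by
  letI tB : TopologicalSpace B := ⊥
  haveI : DiscreteTopology B := ⟨rfl⟩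
  have hUmem : Yᶜ ∈ nhds z := hY.isOpen_compl.mem_nhds hz
  rw [nhds_pi, Filter.mem_pi] at hUmem
  obtain ⟨I, hIfin, t, ht, hsub⟩ := hUmem
  refine ⟨hIfin.toFinset, fun y hy => ?_⟩
  by_contra h
  push_neg at h
  have : y ∈ Set.pi I t := by
    intro g hg
    rw [h g (hIfin.mem_toFinset.2 hg)]
    have := ht g
    rw [nhds_discrete] at this
    exact this
  exact hsub this hy


section Checker

open Nat.Partrec (Code)
open Nat.Partrec.Code
open Encodable (encode decode)

variable {k : ℕ} {A B : Type} [Primcodable A] [Primcodable B]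

/-- Index of an element in a list, via encodings. -/
def idxOf {γ : Type} [Encodable γ] (L : List γ) (w : γ) : ℕ :=
  L.findIdx fun v => decide (encode v = encode w)

theorem get?_idxOf {γ : Type} [Encodable γ] {L : List γ} {w : γ} (hw : w ∈ L) :
    L[idxOf L w]? = some w := by
  have hex : ∃ v ∈ L, (fun v => decide (encode v = encode w)) v = true := ⟨w, hw, by simp⟩
  have hlt : idxOf L w < L.length := List.findIdx_lt_length_of_exists hex
  have hpred : (fun v => decide (encode v = encode w)) (L.get ⟨idxOf L w, hlt⟩) = true :=
    List.findIdx_getElem (w := hlt)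
  have hgw : L.get ⟨idxOf L w, hlt⟩ = w :=
    Encodable.encode_injective (of_decide_eq_true hpred)
  rw [List.getElem?_eq_getElem hlt]; exact congrArg some hgw

theorem primrec_idxOf {γ : Type} [Primcodable γ] : Primrec fun q : List γ × γ =>
    idxOf q.1 q.2 := by
  have hp : Primrec fun x : (List γ × γ) × γ =>
      decide (encode x.2 = encode x.1.2) :=
    (Primrec.eq.comp (Primrec.encode.comp Primrec.snd)
      (Primrec.encode.comp (Primrec.snd.comp Primrec.fst))).decide
  exact Primrec.list_findIdx Primrec.fst hp.to₂

/-- Value of assignment `t` (relative to radius `n`) at word `w`. -/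
def valAt (t : List A) (n : ℕ) (w : List (Fin k)) : Option A :=
  t[idxOf (listsLe (List.finRange k) n) w]?

theorem primrec_valAt : Primrec fun q : (List A × ℕ) × List (Fin k) =>
    valAt q.1.1 q.1.2 q.2 :=
  Primrec.list_getElem?.comp (Primrec.fst.comp Primrec.fst)
    (primrec_idxOf.comp (Primrec.pair
      ((primrec_listsLe (List.finRange k)).comp (Primrec.snd.comp Primrec.fst))
      Primrec.snd))

variable (cW cX : Code) (invg : Fin k → Fin k) (EW : List (List (Fin k)))
variable (ΦL : List A → B) (a₀ : A) (aA : List A)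

/-- Pattern codings over `A` certified (at stage `n`) to belong to the forbidden set. -/
def certCodings (n : ℕ) : List (PatternCoding k A) :=
  (List.range n).filterMap fun m =>
    if (evaln n cX m).isSome then (decode m : Option (PatternCoding k A)) else none

theorem primrec_certCodings : Primrec (certCodings (k := k) (A := A) cX) := by
  have hc : Primrec fun x : ℕ × ℕ => (evaln x.1 cX x.2).isSome :=
    Primrec.option_isSome.comp
      (primrec_evaln.comp (Primrec.pair (Primrec.pair Primrec.fst (Primrec.const cX))
        Primrec.snd))
  have hbody : Primrec fun x : ℕ × ℕ =>
      if (evaln x.1 cX x.2).isSome then (decode x.2 : Option (PatternCoding k A)) else none :=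
    Primrec.ite (Primrec.eq.comp hc (Primrec.const true))
      (Primrec.decode.comp Primrec.snd) (Primrec.const none)
  exact (Primrec.listFilterMap Primrec.list_range hbody.to₂).of_eq fun n => rfl

def pass1 (q : List A × ℕ) : Bool :=
  (listsLe (List.finRange k) q.2).all fun v => (listsLe (List.finRange k) q.2).all fun w =>
    !((evaln q.2 cW (encode (v ++ w.reverse.map invg))).isSome)
    || decide (encode (valAt q.1 q.2 v) = encode (valAt q.1 q.2 w))

def pass2 (q : List A × ℕ) : Bool :=
  (listsLe (List.finRange k) q.2).all fun u =>
    (certCodings (k := k) (A := A) cX q.2).all fun c' =>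
      !(c'.all fun pr => decide (encode (valAt q.1 q.2 (u ++ pr.1)) = encode (some pr.2)))

def viol (q : (PatternCoding k B × ℕ) × List A) : Bool :=
  q.1.1.any fun pr =>
    (EW.all fun ew => (valAt q.2 q.1.2 (pr.1 ++ ew)).isSome)
    && !decide (encode (ΦL (EW.map fun ew => (valAt q.2 q.1.2 (pr.1 ++ ew)).getD a₀))
        = encode pr.2)

def checker (p : PatternCoding k B × ℕ) : Bool :=
  (listsOf aA (listsLe (List.finRange k) p.2).length).all fun t =>
    !(pass1 cW invg (t, p.2) && pass2 (k := k) cX (t, p.2)) || viol EW ΦL a₀ ((p.1, p.2), t)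

theorem primrec_pass1 : Primrec (pass1 (A := A) cW invg) := by
  have hinv : Primrec invg := Primrec.dom_finite _
  have hW : Primrec fun q : List A × ℕ => listsLe (List.finRange k) q.2 :=
    (primrec_listsLe _).comp Primrec.snd
  have hinner : Primrec fun x : ((List A × ℕ) × List (Fin k)) × List (Fin k) =>
      (!((evaln x.1.1.2 cW (encode (x.1.2 ++ x.2.reverse.map invg))).isSome)
        || decide (encode (valAt x.1.1.1 x.1.1.2 x.1.2)
            = encode (valAt x.1.1.1 x.1.1.2 x.2))) := by
    have hq : Primrec fun x : ((List A × ℕ) × List (Fin k)) × List (Fin k) => x.1.1 :=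
      Primrec.fst.comp Primrec.fst
    have hv : Primrec fun x : ((List A × ℕ) × List (Fin k)) × List (Fin k) => x.1.2 :=
      Primrec.snd.comp Primrec.fst
    have hword : Primrec fun x : ((List A × ℕ) × List (Fin k)) × List (Fin k) =>
        x.1.2 ++ x.2.reverse.map invg :=
      Primrec.list_append.comp hv
        (Primrec.list_map (Primrec.list_reverse.comp Primrec.snd)
          ((hinv.comp Primrec.snd).to₂))
    have heval : Primrec fun x : ((List A × ℕ) × List (Fin k)) × List (Fin k) =>
        (evaln x.1.1.2 cW (encode (x.1.2 ++ x.2.reverse.map invg))).isSome :=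
      Primrec.option_isSome.comp (primrec_evaln.comp
        (Primrec.pair (Primrec.pair (Primrec.snd.comp hq) (Primrec.const cW))
          (Primrec.encode.comp hword)))
    have hvalv : Primrec fun x : ((List A × ℕ) × List (Fin k)) × List (Fin k) =>
        valAt x.1.1.1 x.1.1.2 x.1.2 := primrec_valAt.comp (Primrec.pair hq hv)
    have hvalw : Primrec fun x : ((List A × ℕ) × List (Fin k)) × List (Fin k) =>
        valAt x.1.1.1 x.1.1.2 x.2 := primrec_valAt.comp (Primrec.pair hq Primrec.snd)
    have hdec : Primrec fun x : ((List A × ℕ) × List (Fin k)) × List (Fin k) =>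
        decide (encode (valAt x.1.1.1 x.1.1.2 x.1.2) = encode (valAt x.1.1.1 x.1.1.2 x.2)) :=
      (Primrec.eq.comp (Primrec.encode.comp hvalv) (Primrec.encode.comp hvalw)).decide
    exact Primrec.or.comp (Primrec.not.comp heval) hdec
  have hmid : Primrec fun x : (List A × ℕ) × List (Fin k) =>
      (listsLe (List.finRange k) x.1.2).all fun w =>
        !((evaln x.1.2 cW (encode (x.2 ++ w.reverse.map invg))).isSome)
        || decide (encode (valAt x.1.1 x.1.2 x.2) = encode (valAt x.1.1 x.1.2 w)) :=
    primrec_list_all ((primrec_listsLe _).comp (Primrec.snd.comp Primrec.fst)) hinner.to₂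
  exact primrec_list_all hW hmid.to₂

theorem primrec_pass2 : Primrec (pass2 (A := A) (k := k) cX) := by
  have hW : Primrec fun q : List A × ℕ => listsLe (List.finRange k) q.2 :=
    (primrec_listsLe _).comp Primrec.snd
  have hinner : Primrec fun x : (((List A × ℕ) × List (Fin k)) × PatternCoding k A) ×
      (List (Fin k) × A) =>
      decide (encode (valAt x.1.1.1.1 x.1.1.1.2 (x.1.1.2 ++ x.2.1)) = encode (some x.2.2)) := by
    have hq : Primrec fun x : (((List A × ℕ) × List (Fin k)) × PatternCoding k A) ×
        (List (Fin k) × A) => x.1.1.1 := Primrec.fst.comp (Primrec.fst.comp Primrec.fst)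
    have hu : Primrec fun x : (((List A × ℕ) × List (Fin k)) × PatternCoding k A) ×
        (List (Fin k) × A) => x.1.1.2 := Primrec.snd.comp (Primrec.fst.comp Primrec.fst)
    have hpr1 : Primrec fun x : (((List A × ℕ) × List (Fin k)) × PatternCoding k A) ×
        (List (Fin k) × A) => x.2.1 := Primrec.fst.comp Primrec.snd
    have hpr2 : Primrec fun x : (((List A × ℕ) × List (Fin k)) × PatternCoding k A) ×
        (List (Fin k) × A) => x.2.2 := Primrec.snd.comp Primrec.snd
    have hval : Primrec fun x : (((List A × ℕ) × List (Fin k)) × PatternCoding k A) ×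
        (List (Fin k) × A) => valAt x.1.1.1.1 x.1.1.1.2 (x.1.1.2 ++ x.2.1) :=
      primrec_valAt.comp (Primrec.pair hq (Primrec.list_append.comp hu hpr1))
    exact (Primrec.eq.comp (Primrec.encode.comp hval)
      (Primrec.encode.comp (Primrec.option_some.comp hpr2))).decide
  have hmid2 : Primrec fun x : ((List A × ℕ) × List (Fin k)) × PatternCoding k A =>
      !(x.2.all fun pr =>
        decide (encode (valAt x.1.1.1 x.1.1.2 (x.1.2 ++ pr.1)) = encode (some pr.2))) :=
    Primrec.not.comp (primrec_list_all Primrec.snd hinner.to₂)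
  have hmid : Primrec fun x : (List A × ℕ) × List (Fin k) =>
      (certCodings (k := k) (A := A) cX x.1.2).all fun c' =>
        !(c'.all fun pr =>
          decide (encode (valAt x.1.1 x.1.2 (x.2 ++ pr.1)) = encode (some pr.2))) :=
    primrec_list_all ((primrec_certCodings (A := A) cX).comp
      (Primrec.snd.comp Primrec.fst)) hmid2.to₂
  exact primrec_list_all hW hmid.to₂

theorem primrec_viol (hΦL : Primrec ΦL) : Primrec (viol (k := k) EW ΦL a₀) := by
  have hinner : Primrec fun x : ((PatternCoding k B × ℕ) × List A) × (List (Fin k) × B) =>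
      ((EW.all fun ew => (valAt x.1.2 x.1.1.2 (x.2.1 ++ ew)).isSome)
      && !decide (encode (ΦL (EW.map fun ew => (valAt x.1.2 x.1.1.2 (x.2.1 ++ ew)).getD a₀))
          = encode x.2.2)) := by
    have ht : Primrec fun x : ((PatternCoding k B × ℕ) × List A) × (List (Fin k) × B) =>
        x.1.2 := Primrec.snd.comp Primrec.fst
    have hn : Primrec fun x : ((PatternCoding k B × ℕ) × List A) × (List (Fin k) × B) =>
        x.1.1.2 := Primrec.snd.comp (Primrec.fst.comp Primrec.fst)
    have hw : Primrec fun x : ((PatternCoding k B × ℕ) × List A) × (List (Fin k) × B) =>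
        x.2.1 := Primrec.fst.comp Primrec.snd
    have hb : Primrec fun x : ((PatternCoding k B × ℕ) × List A) × (List (Fin k) × B) =>
        x.2.2 := Primrec.snd.comp Primrec.snd
    have hval2 : Primrec fun y : (((PatternCoding k B × ℕ) × List A) × (List (Fin k) × B))
        × List (Fin k) => valAt y.1.1.2 y.1.1.1.2 (y.1.2.1 ++ y.2) :=
      primrec_valAt.comp (Primrec.pair
        (Primrec.pair (ht.comp Primrec.fst) (hn.comp Primrec.fst))
        (Primrec.list_append.comp (hw.comp Primrec.fst) Primrec.snd))
    have hvalall : Primrec fun x : ((PatternCoding k B × ℕ) × List A) × (List (Fin k) × B) =>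
        EW.all fun ew => (valAt x.1.2 x.1.1.2 (x.2.1 ++ ew)).isSome :=
      primrec_list_all (Primrec.const EW) (Primrec.option_isSome.comp hval2).to₂
    have hmap : Primrec fun x : ((PatternCoding k B × ℕ) × List A) × (List (Fin k) × B) =>
        EW.map fun ew => (valAt x.1.2 x.1.1.2 (x.2.1 ++ ew)).getD a₀ :=
      Primrec.list_map (Primrec.const EW)
        (Primrec.option_getD.comp hval2 (Primrec.const a₀)).to₂
    have hdec : Primrec fun x : ((PatternCoding k B × ℕ) × List A) × (List (Fin k) × B) =>
        decide (encode (ΦL (EW.map fun ew => (valAt x.1.2 x.1.1.2 (x.2.1 ++ ew)).getD a₀))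
          = encode x.2.2) :=
      (Primrec.eq.comp (Primrec.encode.comp (hΦL.comp hmap)) (Primrec.encode.comp hb)).decide
    exact Primrec.and.comp hvalall (Primrec.not.comp hdec)
  exact primrec_list_any (Primrec.fst.comp Primrec.fst) hinner.to₂

theorem primrec_checker (hΦL : Primrec ΦL) :
    Primrec (checker (k := k) cW cX invg EW ΦL a₀ aA) := by
  have htup : Primrec fun p : PatternCoding k B × ℕ =>
      listsOf aA (listsLe (List.finRange k) p.2).length :=
    (primrec_listsOf aA).comp
      (Primrec.list_length.comp ((primrec_listsLe _).comp Primrec.snd))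
  have hbody : Primrec fun x : (PatternCoding k B × ℕ) × List A =>
      (!(pass1 cW invg (x.2, x.1.2) && pass2 (k := k) cX (x.2, x.1.2))
        || viol EW ΦL a₀ ((x.1.1, x.1.2), x.2)) := by
    have hn : Primrec fun x : (PatternCoding k B × ℕ) × List A => x.1.2 :=
      Primrec.snd.comp Primrec.fst
    have hp1 : Primrec fun x : (PatternCoding k B × ℕ) × List A =>
        pass1 (A := A) cW invg (x.2, x.1.2) :=
      (primrec_pass1 cW invg).comp (Primrec.pair Primrec.snd hn)
    have hp2 : Primrec fun x : (PatternCoding k B × ℕ) × List A =>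
        pass2 (A := A) (k := k) cX (x.2, x.1.2) :=
      (primrec_pass2 cX).comp (Primrec.pair Primrec.snd hn)
    have hv : Primrec fun x : (PatternCoding k B × ℕ) × List A =>
        viol (k := k) EW ΦL a₀ ((x.1.1, x.1.2), x.2) :=
      (primrec_viol EW ΦL a₀ hΦL).comp
        (Primrec.pair (Primrec.pair (Primrec.fst.comp Primrec.fst) hn) Primrec.snd)
    exact Primrec.or.comp (Primrec.not.comp (Primrec.and.comp hp1 hp2)) hv
  exact primrec_list_all htup hbody.to₂


theorem bool_imp {a b : Bool} : (!a || b) = true ↔ (a = true → b = true) := by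
  cases a <;> cases b <;> simp

theorem bool_imp2 {a b c : Bool} : (!(a && b) || c) = true ↔ (a = true ∧ b = true → c = true) := by
  cases a <;> cases b <;> cases c <;> simp

theorem bool_not {b : Bool} : (!b) = true ↔ ¬(b = true) := by cases b <;> simp

theorem pass1_iff {t : List A} {n : ℕ} :
    pass1 (A := A) cW invg (t, n) = true ↔
      ∀ v ∈ listsLe (List.finRange k) n, ∀ w ∈ listsLe (List.finRange k) n,
        (evaln n cW (encode (v ++ w.reverse.map invg))).isSome = true →
        valAt t n v = valAt t n w := by
  simp only [pass1, List.all_eq_true, bool_imp, decide_eq_true_eq, Encodable.encode_inj]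

theorem pass2_iff {t : List A} {n : ℕ} :
    pass2 (A := A) (k := k) cX (t, n) = true ↔
      ∀ u ∈ listsLe (List.finRange k) n, ∀ c' ∈ certCodings (k := k) (A := A) cX n,
        ¬ ∀ pr ∈ c', valAt t n (u ++ pr.1) = some pr.2 := by
  simp only [pass2, List.all_eq_true, bool_not, decide_eq_true_eq, Encodable.encode_inj]

theorem viol_iff {c : PatternCoding k B} {t : List A} {n : ℕ} :
    viol (k := k) EW ΦL a₀ ((c, n), t) = true ↔
      ∃ pr ∈ c, (∀ ew ∈ EW, (valAt t n (pr.1 ++ ew)).isSome = true) ∧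
        ¬ ΦL (EW.map fun ew => (valAt t n (pr.1 ++ ew)).getD a₀) = pr.2 := by
  simp only [viol, List.any_eq_true, Bool.and_eq_true, List.all_eq_true, bool_not,
    decide_eq_true_eq, Encodable.encode_inj]

theorem checker_iff {c : PatternCoding k B} {n : ℕ} :
    checker (k := k) cW cX invg EW ΦL a₀ aA (c, n) = true ↔
      ∀ t ∈ listsOf aA (listsLe (List.finRange k) n).length,
        (pass1 (A := A) cW invg (t, n) = true ∧ pass2 (A := A) (k := k) cX (t, n) = true) →
          viol (k := k) EW ΦL a₀ ((c, n), t) = true := by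
  simp only [checker, List.all_eq_true, bool_imp2]

theorem certCodings_sound {CX : Set (PatternCoding k A)}
    (hcX : ∀ m : ℕ, (∃ s, ((evaln s cX m).isSome : Prop)) ↔
      ∃ a, Encodable.decode m = some a ∧ a ∈ CX)
    {c' : PatternCoding k A} {n : ℕ} (h : c' ∈ certCodings (k := k) (A := A) cX n) :
    c' ∈ CX := by
  rw [certCodings, List.mem_filterMap] at h
  obtain ⟨m, -, hm⟩ := h
  by_cases hs : (evaln n cX m).isSome
  · rw [if_pos hs] at hm
    obtain ⟨a, ha, haCX⟩ := (hcX m).1 ⟨n, hs⟩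
    rw [ha] at hm
    cases hm
    exact haCX
  · rw [if_neg hs] at hm
    cases hm

theorem certCodings_complete {CX : Set (PatternCoding k A)}
    (hcX : ∀ m : ℕ, (∃ s, ((evaln s cX m).isSome : Prop)) ↔
      ∃ a, Encodable.decode m = some a ∧ a ∈ CX)
    {c' : PatternCoding k A} (h : c' ∈ CX) :
    ∃ s₀, ∀ n, s₀ ≤ n → c' ∈ certCodings (k := k) (A := A) cX n := by
  obtain ⟨s, hs⟩ := (hcX (encode c')).2 ⟨c', Encodable.encodek c', h⟩
  refine ⟨max s (encode c' + 1), fun n hn => ?_⟩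
  rw [certCodings, List.mem_filterMap]
  refine ⟨encode c', List.mem_range.2 (lt_of_lt_of_le (Nat.lt_of_lt_of_le (Nat.lt_succ_self _)
    (le_max_right s (encode c' + 1))) hn), ?_⟩
  have hsome : (evaln n cX (encode c')).isSome := by
    obtain ⟨x, hx⟩ := Option.isSome_iff_exists.1 hs
    exact Option.isSome_iff_exists.2 ⟨x, evaln_mono (le_trans (le_max_left _ _) hn) hx⟩
  rw [if_pos hsome, Encodable.encodek]

-- `valAt` helper lemmas
theorem mem_listsLe' {n : ℕ} {w : List (Fin k)} (hw : w.length ≤ n) :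
    w ∈ listsLe (List.finRange k) n :=
  mem_listsLe.2 ⟨hw, fun x _ => List.mem_finRange x⟩

theorem valAt_of_mem {t : List A} {n : ℕ} {w : List (Fin k)}
    (ht : t.length = (listsLe (List.finRange k) n).length) (hw : w.length ≤ n) :
    ∃ a, valAt t n w = some a := by
  have hmem := mem_listsLe' (k := k) hw
  have h1 := get?_idxOf hmem
  have hlt : idxOf (listsLe (List.finRange k) n) w < t.length := by
    rw [ht]
    exact List.getElem?_eq_some_iff.1 h1 |>.choose
  rw [valAt, List.getElem?_eq_getElem hlt]
  exact ⟨_, rfl⟩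

theorem valAt_map {n : ℕ} {w : List (Fin k)} (f : List (Fin k) → A) (hw : w.length ≤ n) :
    valAt ((listsLe (List.finRange k) n).map f) n w = some (f w) := by
  rw [valAt, List.getElem?_map, get?_idxOf (mem_listsLe' hw)]
  rfl

theorem valAt_map_isSome {n : ℕ} {w : List (Fin k)} {f : List (Fin k) → A}
    (h : (valAt ((listsLe (List.finRange k) n).map f) n w).isSome = true) :
    w.length ≤ n ∧ valAt ((listsLe (List.finRange k) n).map f) n w = some (f w) := by
  set L := listsLe (List.finRange k) n with hL
  rw [valAt, List.getElem?_map] at h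
  have h2 : (L[idxOf L w]?).isSome := by
    cases hg : L[idxOf L w]? with
    | none => rw [hg] at h; simp at h
    | some v => simp
  have hlt : idxOf L w < L.length := List.getElem?_eq_some_iff.1 (Option.isSome_iff_exists.1 h2).choose_spec |>.choose
  have hpred : (fun v => decide (encode v = encode w)) (L.get ⟨idxOf L w, hlt⟩) = true :=
    List.findIdx_getElem (w := hlt)
  have hgw : L.get ⟨idxOf L w, hlt⟩ = w :=
    Encodable.encode_injective (of_decide_eq_true hpred)
  have hwmem : w ∈ L := hgw ▸ List.get_mem L _
  have hwlen : w.length ≤ n := by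
    have := mem_listsLe.1 (hL ▸ hwmem)
    exact this.1
  exact ⟨hwlen, valAt_map f hwlen⟩

end Checker

/-- Over a recursively presented group, the factor of an effectively closed
subshift under a factor code is effectively closed. -/
theorem effectivelyClosed_factor
    {G : Type} [Group G] {k : ℕ} (S : Fin k → G) (hS : IsGenData S)
    (hWP : REPred (· ∈ WP S))
    {A B : Type} [Fintype A] [Primcodable A] [Fintype B] [Primcodable B]
    (X : Set (G → A)) (Y : Set (G → B)) (φ : (G → A) → (G → B))
    (hsubX : IsSubshift X) (hsubY : IsSubshift Y)
    (hX : EffectivelyClosed S X) (hφ : FactorCode X Y φ) :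
    EffectivelyClosed S Y := by
  classical
  obtain ⟨CX, hCXre, hXeq⟩ := hX
  obtain ⟨hcont, hequiv, himg⟩ := hφ
  by_cases hXemp : X = ∅
  · -- `Y` is empty; it is defined by the empty pattern coding.
    have hYemp : Y = ∅ := by rw [← himg, hXemp, Set.image_empty]
    have hre : REPred fun c : PatternCoding k B =>
        ∃ n : ℕ, (fun x : PatternCoding k B × ℕ => decide (x.1 = [])) (c, n) = true :=
      rePred_exists (Primrec.eq.comp Primrec.fst (Primrec.const [])).decide
    refine ⟨{c | ∃ n : ℕ, (fun x : PatternCoding k B × ℕ => decide (x.1 = [])) (c, n) = true},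
      hre, ?_⟩
    rw [hYemp]
    ext z
    simp only [XC, Set.mem_setOf_eq, Set.mem_empty_iff_false, false_iff, not_not]
    exact ⟨1, [], ⟨0, by simp⟩, fun p hp => absurd hp List.not_mem_nil⟩
  · obtain ⟨x₀, hx₀⟩ := Set.nonempty_iff_ne_empty.2 hXemp
    have a₀ : A := x₀ 1
    have b₀ : B := φ x₀ 1
    choose invg hinvg using hS.2.1
    choose rep hrep using exists_word S hS
    obtain ⟨E, hE⟩ := window_exists (1 : G) hsubX.1 hcont
    set EW : List (List (Fin k)) := E.toList.map rep with hEWdef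
    -- The local rule, as a function of the list of values on the window.
    set ΦBig : List A → B := fun l =>
      if h : ∃ x ∈ X, l = EW.map fun w => x (wordEval S w) then φ h.choose 1 else b₀
      with hΦBigdef
    have hΦBig_spec : ∀ x ∈ X, φ x 1 = ΦBig (EW.map fun w => x (wordEval S w)) := by
      intro x hx
      have hex : ∃ x' ∈ X, (EW.map fun w => x (wordEval S w)) = EW.map fun w =>
          x' (wordEval S w) := ⟨x, hx, rfl⟩
      rw [hΦBigdef]
      simp only [dif_pos hex]
      obtain ⟨hxc, hmapeq⟩ := hex.choose_spec
      refine (hE hex.choose hxc x hx fun g hg => ?_).symm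
      have hrepmem : rep g ∈ EW := List.mem_map_of_mem (f := rep) (Finset.mem_toList.2 hg)
      have := (List.map_inj_left.1 hmapeq.symm) (rep g) hrepmem
      rw [hrep g] at this
      exact this
    have hΦshift : ∀ x ∈ X, ∀ v : List (Fin k),
        φ x (wordEval S v) = ΦBig (EW.map fun w => x (wordEval S (v ++ w))) := by
      intro x hx v
      have hxv : (fun h => x (wordEval S v * h)) ∈ X := by
        have := hsubX.2 x hx (wordEval S v)⁻¹
        simpa [inv_inv] using this
      have h1 : φ (fun h => x (wordEval S v * h)) 1 = φ x (wordEval S v) := by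
        have heq := congrFun (hequiv x hx (wordEval S v)⁻¹) 1
        simpa [inv_inv] using heq
      rw [← h1, hΦBig_spec _ hxv]
      congr 1
      refine List.map_congr_left fun w hw => ?_
      rw [wordEval_append]
    -- The local rule as a computable function via a finite lookup table.
    set aA : List A := (Finset.univ : Finset A).toList with haAdef
    have haA : ∀ a : A, a ∈ aA := fun a => Finset.mem_toList.2 (Finset.mem_univ a)
    set keys : List (List A) := listsOf aA EW.length with hkeysdef
    set vals : List B := keys.map ΦBig with hvalsdef
    set ΦL : List A → B := fun l => (vals[idxOf keys l]?).getD b₀ with hΦLdef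
    have hΦLeq : ∀ l : List A, l.length = EW.length → ΦL l = ΦBig l := by
      intro l hl
      have hmem : l ∈ keys := by
        rw [hkeysdef]
        exact mem_listsOf.2 ⟨hl, fun a _ => haA a⟩
      rw [hΦLdef]
      simp only [hvalsdef, List.getElem?_map, get?_idxOf hmem, Option.map_some, Option.getD_some]
    have hΦLprim : Primrec ΦL :=
      Primrec.option_getD.comp
        (Primrec.list_getElem?.comp (Primrec.const vals)
          (primrec_idxOf.comp (Primrec.pair (Primrec.const keys) Primrec.id)))
        (Primrec.const b₀)
    -- Codes for the word problem and the forbidden pattern codings of `X`.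
    obtain ⟨cW, hcW⟩ := rePred_code hWP
    obtain ⟨cXc, hcX⟩ := rePred_code hCXre
    set Ch : PatternCoding k B × ℕ → Bool := checker cW cXc invg EW ΦL a₀ aA with hChdef
    have hChprim : Primrec Ch := primrec_checker cW cXc invg EW ΦL a₀ aA hΦLprim
    set C : Set (PatternCoding k B) := {c | ∃ n, Ch (c, n) = true} with hCdef
    have hre : REPred (· ∈ C) := rePred_exists hChprim
    -- Soundness: codings in `C` are avoided by every image point.
    have soundness : ∀ c ∈ C, ∀ x ∈ X, ∃ pr ∈ c, φ x (wordEval S pr.1) ≠ pr.2 := by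
      rintro c ⟨n, hch⟩ x hx
      set t : List A := (listsLe (List.finRange k) n).map fun w => x (wordEval S w) with htdef
      have htmem : t ∈ listsOf aA (listsLe (List.finRange k) n).length := by
        refine mem_listsOf.2 ⟨by simp [htdef], fun a _ => haA a⟩
      have hts := (checker_iff cW cXc invg EW ΦL a₀ aA).1 hch t htmem
      have hp1 : pass1 (A := A) cW invg (t, n) = true := by
        rw [pass1_iff]
        intro v hv w hw hsome
        have hwp : (v ++ w.reverse.map invg) ∈ WP S := by
          obtain ⟨a, ha, hain⟩ := (hcW (Encodable.encode (v ++ w.reverse.map invg))).1 ⟨n, hsome⟩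
          rw [Encodable.encodek] at ha
          cases ha
          exact hain
        have hvw : wordEval S v = wordEval S w := by
          have h1 : wordEval S v * (wordEval S w)⁻¹ = 1 := by
            rw [← wordEval_wordInv S invg hinvg w, ← wordEval_append]
            exact hwp
          exact mul_inv_eq_one.1 h1
        rw [htdef, valAt_map _ (mem_listsLe.1 hv).1, valAt_map _ (mem_listsLe.1 hw).1, hvw]
      have hp2 : pass2 (A := A) (k := k) cXc (t, n) = true := by
        rw [pass2_iff]
        intro u hu c' hc' hall
        have hxX : x ∈ XC S CX := hXeq ▸ hx
        refine hxX ⟨wordEval S u, c', certCodings_sound cXc hcX hc', fun p hp => ?_⟩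
        have h1 := hall p hp
        have h2 : (valAt t n (u ++ p.1)).isSome = true := by rw [h1]; rfl
        obtain ⟨hlen, heq⟩ := valAt_map_isSome (htdef ▸ h2)
        rw [htdef, heq] at h1
        have h3 := Option.some_injective _ h1
        rw [← wordEval_append]
        exact h3
      obtain ⟨pr, hprc, hallsome, hPhine⟩ := (viol_iff EW ΦL a₀).1 (hts ⟨hp1, hp2⟩)
      refine ⟨pr, hprc, fun hcontra => hPhine ?_⟩
      have hlist : (EW.map fun ew => (valAt t n (pr.1 ++ ew)).getD a₀)
          = EW.map fun ew => x (wordEval S (pr.1 ++ ew)) := by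
        refine List.map_congr_left fun ew hew => ?_
        obtain ⟨hlen, heq⟩ := valAt_map_isSome (htdef ▸ hallsome ew hew)
        rw [htdef, heq]
        rfl
      rw [hlist, hΦLeq _ (by simp), ← hΦshift x hx pr.1, hcontra]
    -- Completeness: semantically forbidden codings are eventually certified.
    have hardness : ∀ c : PatternCoding k B,
        (∀ x ∈ X, ∃ pr ∈ c, φ x (wordEval S pr.1) ≠ pr.2) → c ∈ C := by
      intro c hsem
      by_contra hcC
      have hno : ∀ n, ¬ (Ch (c, n) = true) := fun n h => hcC ⟨n, h⟩
      have hex : ∀ n, ∃ t, t ∈ listsOf aA (listsLe (List.finRange k) n).length ∧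
          (pass1 (A := A) cW invg (t, n) = true ∧ pass2 (A := A) (k := k) cXc (t, n) = true) ∧
          ¬ viol (k := k) EW ΦL a₀ ((c, n), t) = true := by
        intro n
        by_contra hcon
        push_neg at hcon
        exact hno n ((checker_iff cW cXc invg EW ΦL a₀ aA).2
          fun t htm hpass => hcon t htm hpass)
      choose t htmem hpass hnviol using hex
      have htlen : ∀ n, (t n).length = (listsLe (List.finRange k) n).length :=
        fun n => (mem_listsOf.1 (htmem n)).1
      set Fb : ℕ → List (Fin k) → A := fun n w => (valAt (t n) n w).getD a₀ with hFbdef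
      have hsomeF : ∀ (n : ℕ) (w : List (Fin k)), w.length ≤ n →
          valAt (t n) n w = some (Fb n w) := by
        intro n w hw
        obtain ⟨a, ha⟩ := valAt_of_mem (htlen n) hw
        simp only [hFbdef, ha, Option.getD_some]
      set U : Ultrafilter ℕ := Ultrafilter.of Filter.atTop with hUdef
      have hUat : ∀ N : ℕ, {n : ℕ | N ≤ n} ∈ U :=
        fun N => Ultrafilter.of_le Filter.atTop (Filter.mem_atTop N)
      haveI : Nonempty A := ⟨a₀⟩
      choose fl hfl using fun w : List (Fin k) => ultra_exists_const U fun n => Fb n w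
      have hagree : ∀ (Ws : List (List (Fin k))) (N : ℕ),
          ∃ n, N ≤ n ∧ ∀ w ∈ Ws, Fb n w = fl w := by
        intro Ws N
        have h1 : (⋂ w ∈ {w : List (Fin k) | w ∈ Ws}, {n : ℕ | Fb n w = fl w}) ∈ U :=
          (Filter.biInter_mem (List.finite_toSet Ws)).2 fun w _ => hfl w
        obtain ⟨n, hn⟩ := Ultrafilter.nonempty_of_mem (Filter.inter_mem h1 (hUat N))
        exact ⟨n, hn.2, fun w hw => Set.mem_iInter₂.1 hn.1 w hw⟩
      have hcons : ∀ v w : List (Fin k), wordEval S v = wordEval S w → fl v = fl w := by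
        intro v w hvw
        have hwp : (v ++ w.reverse.map invg) ∈ WP S := by
          show wordEval S _ = 1
          rw [wordEval_append, wordEval_wordInv S invg hinvg, hvw, mul_inv_cancel]
        obtain ⟨s, hs⟩ := (rePred_code_encode hcW (v ++ w.reverse.map invg)).1 hwp
        obtain ⟨n, hn, hagg⟩ := hagree [v, w] (max s (max v.length w.length))
        have hvl : v.length ≤ n :=
          le_trans (le_trans (le_max_left _ _) (le_max_right s _)) hn
        have hwl : w.length ≤ n :=
          le_trans (le_trans (le_max_right _ _) (le_max_right s _)) hn
        have hsome : (Nat.Partrec.Code.evaln n cW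
            (Encodable.encode (v ++ w.reverse.map invg))).isSome = true := by
          obtain ⟨x', hx'⟩ := Option.isSome_iff_exists.1 hs
          exact Option.isSome_iff_exists.2
            ⟨x', Nat.Partrec.Code.evaln_mono (le_trans (le_max_left _ _) hn) hx'⟩
        have h1 := ((pass1_iff cW invg).1 (hpass n).1) v (mem_listsLe' hvl) w (mem_listsLe' hwl) hsome
        rw [hsomeF n v hvl, hsomeF n w hwl] at h1
        have h2 := Option.some_injective _ h1
        rw [← hagg v (by simp), ← hagg w (by simp)]
        exact h2
      set x : G → A := fun g => fl (rep g) with hxdef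
      have hxw : ∀ w, x (wordEval S w) = fl w := fun w => hcons (rep (wordEval S w)) w (hrep _)
      have hxX : x ∈ X := by
        rw [hXeq]
        rintro ⟨g, c', hc'CX, hocc⟩
        obtain ⟨s, hs⟩ := (rePred_code_encode hcX c').1 hc'CX
        obtain ⟨n, hn, hagg⟩ := hagree (c'.map fun pr => rep g ++ pr.1)
          (max (max s (Encodable.encode c' + 1))
            ((rep g).length + (c'.map fun pr => pr.1.length).sum))
        have hulen : (rep g).length ≤ n :=
          le_trans (le_trans (Nat.le_add_right _ _) (le_max_right _ _)) hn
        have hprlen : ∀ pr ∈ c', (rep g ++ pr.1).length ≤ n := by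
          intro pr hpr
          have h1 : pr.1.length ≤ (c'.map fun pr => pr.1.length).sum :=
            List.single_le_sum (fun _ _ => Nat.zero_le _) _
              (List.mem_map_of_mem (f := fun pr => pr.1.length) hpr)
          have h2 : (rep g ++ pr.1).length ≤ (rep g).length +
              (c'.map fun pr => pr.1.length).sum := by
            rw [List.length_append]
            omega
          exact le_trans h2 (le_trans (le_max_right _ _) hn)
        have hcert : c' ∈ certCodings (k := k) (A := A) cXc n := by
          rw [certCodings, List.mem_filterMap]
          refine ⟨Encodable.encode c', List.mem_range.2 ?_, ?_⟩
          · have : Encodable.encode c' + 1 ≤ n :=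
              le_trans (le_trans (le_max_right s _) (le_max_left _ _)) hn
            omega
          · have hsome : (Nat.Partrec.Code.evaln n cXc (Encodable.encode c')).isSome := by
              obtain ⟨x', hx'⟩ := Option.isSome_iff_exists.1 hs
              refine Option.isSome_iff_exists.2 ⟨x', Nat.Partrec.Code.evaln_mono ?_ hx'⟩
              exact le_trans (le_trans (le_max_left s _) (le_max_left _ _)) hn
            rw [if_pos hsome, Encodable.encodek]
        refine ((pass2_iff cXc).1 (hpass n).2) (rep g) (mem_listsLe' hulen) c' hcert fun pr hpr => ?_
        rw [hsomeF n _ (hprlen pr hpr)]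
        have h1 : Fb n (rep g ++ pr.1) = fl (rep g ++ pr.1) :=
          hagg _ (List.mem_map_of_mem hpr)
        rw [h1, ← hxw (rep g ++ pr.1), wordEval_append, hrep, hocc pr hpr]
      obtain ⟨pr, hprc, hne⟩ := hsem x hxX
      obtain ⟨n, hn, hagg⟩ := hagree (EW.map fun ew => pr.1 ++ ew)
        (pr.1.length + (EW.map List.length).sum)
      have hlen : ∀ ew ∈ EW, (pr.1 ++ ew).length ≤ n := by
        intro ew hew
        have h1 : ew.length ≤ (EW.map List.length).sum :=
          List.single_le_sum (fun _ _ => Nat.zero_le _) _ (List.mem_map_of_mem (f := List.length) hew)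
        have h2 : (pr.1 ++ ew).length ≤ pr.1.length + (EW.map List.length).sum := by
          rw [List.length_append]
          omega
        exact le_trans h2 hn
      have hnv := hnviol n
      rw [viol_iff] at hnv
      have hall : ∀ ew ∈ EW, (valAt (t n) n (pr.1 ++ ew)).isSome = true := by
        intro ew hew
        rw [hsomeF n _ (hlen ew hew)]
        rfl
      have hPhi : ΦL (EW.map fun ew => (valAt (t n) n (pr.1 ++ ew)).getD a₀) = pr.2 := by
        by_contra hne2
        exact hnv ⟨pr, hprc, hall, hne2⟩
      have hlist : (EW.map fun ew => (valAt (t n) n (pr.1 ++ ew)).getD a₀)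
          = EW.map fun ew => x (wordEval S (pr.1 ++ ew)) := by
        refine List.map_congr_left fun ew hew => ?_
        rw [hsomeF n _ (hlen ew hew)]
        show Fb n (pr.1 ++ ew) = _
        rw [hagg _ (List.mem_map_of_mem hew), hxw]
      apply hne
      rw [hΦshift x hxX pr.1, ← hΦLeq _ (by simp), ← hlist, hPhi]
    refine ⟨C, hre, ?_⟩
    ext z
    constructor
    · intro hz
      rintro ⟨g, c, hcC, hocc⟩
      have hy' : (fun h => z (g * h)) ∈ Y := by
        have := hsubY.2 z hz g⁻¹
        simpa [inv_inv] using this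
      rw [← himg] at hy'
      obtain ⟨x, hx, hφx⟩ := hy'
      obtain ⟨pr, hprc, hne⟩ := soundness c hcC x hx
      apply hne
      have := congrFun hφx (wordEval S pr.1)
      rw [this]
      exact hocc pr hprc
    · intro hz
      by_contra hzY
      obtain ⟨F, hF⟩ := closed_sep hsubY.1 hzY
      set cz : PatternCoding k B := F.toList.map fun g => (rep g, z g) with hczdef
      have hsem : ∀ x ∈ X, ∃ pr ∈ cz, φ x (wordEval S pr.1) ≠ pr.2 := by
        intro x hx
        have hφxY : φ x ∈ Y := himg ▸ Set.mem_image_of_mem φ hx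
        obtain ⟨g, hgF, hne⟩ := hF (φ x) hφxY
        refine ⟨(rep g, z g), List.mem_map_of_mem (Finset.mem_toList.2 hgF), ?_⟩
        simpa [hrep] using hne
      refine hz ⟨1, cz, hardness cz hsem, fun p hp => ?_⟩
      obtain ⟨g, hgF, rfl⟩ := List.mem_map.1 hp
      simp [hrep]

end SDG
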